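/- The vector |η_2⟩ = Σ_{m≥0} |2m⟩/(q⁴;q⁴)_m in the (completed) q-boson Fock space satisfies (a⁺ − a⁻)|η_2⟩ = 0. Moreover, up to scalar multiple, |η_2⟩ is the unique formal vector Σ_m c_m|m⟩ annihilated by a⁺ − a⁻. -/

import Mathlib

noncomputable section

/-- `a⁺` on the completed Fock space (coefficient-wise). -/
def aP (v : ℕ → ℂ) : ℕ → ℂ := fun m => match m with
  | 0 => 0
  | Nat.succ l => v l

/-- `a⁻`: `(a⁻ v)_m = (1 - q^{2(m+1)}) v_{m+1}`. -/
def aM (q : ℂ) (v : ℕ → ℂ) : ℕ → ℂ := fun m => (1 - q ^ (2 * (m + 1))) * v (m + 1)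

/-- The boundary vector `|η_2⟩ = Σ_{m ≥ 0} |2m⟩/(q⁴;q⁴)_m`. -/
def eta2 (q : ℂ) : ℕ → ℂ := fun m =>
  if m % 2 = 0 then (∏ j ∈ Finset.range (m / 2), (1 - (q ^ 4) ^ (j + 1)))⁻¹ else 0

lemma hfac (q : ℂ) (hqroot : ∀ k : ℕ, 0 < k → q ^ k ≠ 1) (n : ℕ) (hn : 0 < n) :
    (1 : ℂ) - q ^ n ≠ 0 := fun h => hqroot n hn (sub_eq_zero.mp h).symm

lemma hprod (q : ℂ) (hqroot : ∀ k : ℕ, 0 < k → q ^ k ≠ 1) (k : ℕ) :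
    (∏ j ∈ Finset.range k, (1 - (q ^ 4) ^ (j + 1))) ≠ 0 := by
  apply Finset.prod_ne_zero_iff.mpr
  intro j _
  rw [← pow_mul]
  exact hfac q hqroot _ (by positivity)

lemma eta2_even (q : ℂ) (k : ℕ) :
    eta2 q (2 * k) = (∏ j ∈ Finset.range k, (1 - (q ^ 4) ^ (j + 1)))⁻¹ := by
  simp [eta2, Nat.mul_mod_right, Nat.mul_div_cancel_left _ (by norm_num : 0 < 2)]

lemma eta2_odd (q : ℂ) (k : ℕ) : eta2 q (2 * k + 1) = 0 := by
  simp [eta2, Nat.add_mul_mod_self_left, Nat.mul_add_mod]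

/-- `(a⁺ - a⁻)|η_2⟩ = 0`, and every formal vector annihilated by `a⁺ - a⁻` is a scalar
multiple of `|η_2⟩`. -/
theorem stmt8 (q : ℂ) (hq0 : q ≠ 0) (hqroot : ∀ k : ℕ, 0 < k → q ^ k ≠ 1) :
    aP (eta2 q) - aM q (eta2 q) = 0 ∧
    ∀ c : ℕ → ℂ, aP c - aM q c = 0 → ∃ s : ℂ, c = s • eta2 q := by
  constructor
  · funext m
    obtain ⟨k, rfl | rfl⟩ : ∃ k, m = 2 * k ∨ m = 2 * k + 1 := ⟨m / 2, by omega⟩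
    · rcases k with _ | k
      · simp [aP, aM, eta2]
      · have e : 2 * (k + 1) = (2 * k + 1) + 1 := by ring
        simp only [Pi.sub_apply, Pi.zero_apply, e, aP, aM]
        rw [eta2_odd q k, show 2 * k + 1 + 1 + 1 = 2 * (k + 1) + 1 from by ring, eta2_odd]
        ring
    · simp only [Pi.sub_apply, Pi.zero_apply, aP, aM]
      rw [show 2 * k + 1 + 1 = 2 * (k + 1) from by ring]
      rw [eta2_even, eta2_even, Finset.prod_range_succ]
      have hP := hprod q hqroot k
      have hf : (1 : ℂ) - (q ^ 4) ^ (k + 1) ≠ 0 := by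
        rw [← pow_mul]; exact hfac q hqroot _ (by positivity)
      have hpow : q ^ (2 * (2 * (k + 1))) = (q ^ 4) ^ (k + 1) := by
        rw [← pow_mul]; ring_nf
      rw [hpow]
      field_simp
      simp
  · intro c hc
    have heq : ∀ m, c m = (1 - q ^ (2 * (m + 2))) * c (m + 2) := by
      intro m
      have h := congrFun hc (m + 1)
      simpa [aP, aM, sub_eq_zero] using h
    have h1 : c 1 = 0 := by
      have h := congrFun hc 0
      simp only [Pi.sub_apply, Pi.zero_apply, aP, aM, sub_eq_zero] at h
      have hf : (1 : ℂ) - q ^ (2 * (0 + 1)) ≠ 0 := hfac q hqroot _ (by norm_num)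
      exact (mul_eq_zero.mp h.symm).resolve_left hf
    have hodd : ∀ k, c (2 * k + 1) = 0 := by
      intro k
      induction k with
      | zero => exact h1
      | succ k ih =>
        have h := heq (2 * k + 1)
        rw [ih] at h
        have hf : (1 : ℂ) - q ^ (2 * (2 * k + 1 + 2)) ≠ 0 := hfac q hqroot _ (by positivity)
        have := (mul_eq_zero.mp h.symm).resolve_left hf
        convert this using 2
        try ring
    have heven : ∀ k, c (2 * k) = c 0 * (∏ j ∈ Finset.range k, (1 - (q ^ 4) ^ (j + 1)))⁻¹ := by
      intro k
      induction k with
      | zero => simp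
      | succ k ih =>
        have h := heq (2 * k)
        rw [ih] at h
        have hP := hprod q hqroot k
        have hf : (1 : ℂ) - (q ^ 4) ^ (k + 1) ≠ 0 := by
          rw [← pow_mul]; exact hfac q hqroot _ (by positivity)
        have hpow : q ^ (2 * (2 * k + 2)) = (q ^ 4) ^ (k + 1) := by
          rw [← pow_mul]; ring_nf
        have h2 : 2 * k + 2 = 2 * (k + 1) := by ring
        rw [hpow, h2] at h
        rw [Finset.prod_range_succ]
        field_simp at h ⊢
        try linear_combination -h
        try linear_combination h
    refine ⟨c 0, funext fun m => ?_⟩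
    rcases Nat.even_or_odd m with ⟨k, hk⟩ | ⟨k, hk⟩
    · have hk' : m = 2 * k := by omega
      rw [hk', Pi.smul_apply, smul_eq_mul, eta2_even]
      exact heven k
    · have hk' : m = 2 * k + 1 := by omega
      rw [hk', Pi.smul_apply, smul_eq_mul, eta2_odd, mul_zero]
      exact hodd k
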